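/- Let T' be a tree with nonnegative integer node weights, and let v be a 0-weight node of T' with a single child u. Let F(x,k) denote the maximum pseudo-entropy of a k-node summary tree of the subtree rooted at x. Then F(v, k+1) = F(u, k) for every k with 2 ≤ k ≤ |T'_v| - 1, and F(v, 1) = F(u, 1). -/
import Mathlib


/-- A rooted tree with real node weights and an ordered list of children. -/
inductive WTree where
  | node : ℝ → List WTree → WTree

mutual
/-- Total weight (size) of the subtree. -/
def WTree.wt : WTree → ℝ
  | .node w cs => w + WTree.wtList cs
def WTree.wtList : List WTree → ℝ
  | [] => 0
  | t :: ts => WTree.wt t + WTree.wtList ts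
end

mutual
/-- Number of nodes of the tree. -/
def WTree.size : WTree → ℕ
  | .node _ cs => 1 + WTree.sizeList cs
def WTree.sizeList : List WTree → ℕ
  | [] => 0
  | t :: ts => WTree.size t + WTree.sizeList ts
end

/-- A summary tree of a subtree: either the whole subtree collapsed to a single node,
or the root kept as a singleton together with, for each child, either a summary of the
child's subtree (`some s`) or membership of that child in the single group node
`other_v` (`none`). -/
inductive Summ where
  | leafAll : Summ
  | expand : List (Option Summ) → Summ

/-- `Valid t s` : `s` is a summary tree of the tree `t`. -/
inductive Valid : WTree → Summ → Prop
  | all (t : WTree) : Valid t .leafAll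
  | expand (w : ℝ) (cs : List WTree) (subs : List (Option Summ))
      (h : List.Forall₂ (fun c os => ∀ s, os = some s → Valid c s) cs subs) :
      Valid (.node w cs) (.expand subs)

mutual
/-- The number of nodes of a summary tree. -/
def Summ.count : Summ → ℕ
  | .leafAll => 1
  | .expand subs => 1 + (if subs.any Option.isNone then 1 else 0) + Summ.countList subs
def Summ.countList : List (Option Summ) → ℕ
  | [] => 0
  | none :: rest => Summ.countList rest
  | some s :: rest => Summ.count s + Summ.countList rest
end

/-- Total weight of the children placed in the group node `other_v`. -/
def otherWeight : List WTree → List (Option Summ) → ℝ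
  | _, [] => 0
  | [], _ :: _ => 0
  | c :: cs, os :: rest => (if os.isNone then WTree.wt c else 0) + otherWeight cs rest

mutual
/-- The list of node weights of a summary tree of `t`. -/
def parts : WTree → Summ → List ℝ
  | t, .leafAll => [WTree.wt t]
  | .node w cs, .expand subs =>
      w :: ((if subs.any Option.isNone then [otherWeight cs subs] else [])
        ++ partsList cs subs)
def partsList : List WTree → List (Option Summ) → List ℝ
  | _, [] => []
  | [], _ :: _ => []
  | _ :: cs, none :: rest => partsList cs rest
  | c :: cs, some s :: rest => parts c s ++ partsList cs rest
end

/-- The entropy `-Σ (Wᵢ/W)·lg(Wᵢ/W)` of a list of node weights, `W` the total weight. -/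
noncomputable def listEntropy (W : ℝ) (l : List ℝ) : ℝ :=
  -((l.map (fun x => x / W * Real.logb 2 (x / W))).sum)

/-- `AllNodes P t` : the predicate `P` (of the weight and children list) holds at every
node of `t`. -/
inductive WTree.AllNodes (P : ℝ → List WTree → Prop) : WTree → Prop
  | mk (w : ℝ) (cs : List WTree) : P w cs → (∀ c ∈ cs, WTree.AllNodes P c) →
      WTree.AllNodes P (.node w cs)

/-- `F W t k` : the maximum pseudo-entropy of a k-node summary tree of the subtree `t`,
where `W` is the total weight of the entire tree. -/
noncomputable def F (W : ℝ) (t : WTree) (k : ℕ) : ℝ :=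
  sSup {e : ℝ | ∃ s : Summ, Valid t s ∧ Summ.count s = k ∧ e = listEntropy W (parts t s)}

lemma one_le_count (s : Summ) : 1 ≤ s.count := by
  cases s with
  | leafAll => simp [Summ.count]
  | expand subs => simp [Summ.count]; omega

lemma listEntropy_zero_cons (W : ℝ) (l : List ℝ) :
    listEntropy W (0 :: l) = listEntropy W l := by
  simp [listEntropy]

lemma wt_v (u : WTree) : WTree.wt (WTree.node 0 [u]) = WTree.wt u := by
  simp [WTree.wt, WTree.wtList]

/-- For a 0-weight node `v` with a single child `u` (here `v` is `WTree.node 0 [u]`),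
in a tree with nonnegative integer weights: `F(v, k+1) = F(u, k)` for
`2 ≤ k ≤ |T'_v| - 1`, and `F(v, 1) = F(u, 1)`. -/
theorem zero_weight_single_child (u : WTree)
    (hint : WTree.AllNodes (fun w _ => ∃ m : ℕ, w = (m : ℝ)) (WTree.node 0 [u]))
    (W : ℝ) (hW : 0 < W) :
    (∀ k : ℕ, 2 ≤ k → k ≤ WTree.size (WTree.node 0 [u]) - 1 →
      F W (WTree.node 0 [u]) (k + 1) = F W u k) ∧
    F W (WTree.node 0 [u]) 1 = F W u 1 := by
  constructor
  · intro k hk _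
    unfold F
    congr 1
    ext e
    constructor
    · rintro ⟨s, hv, hc, rfl⟩
      cases hv with
      | all => simp [Summ.count] at hc; omega
      | expand w cs subs h =>
        cases h with
        | cons h1 h2 =>
          cases h2
          rename_i os
          cases os with
          | none => simp [Summ.count, Summ.countList] at hc; omega
          | some s' =>
            have hv' : Valid u s' := h1 s' rfl
            have hc' : Summ.count s' = k := by
              simp [Summ.count, Summ.countList] at hc; omega
            refine ⟨s', hv', hc', ?_⟩
            simp [parts, partsList, listEntropy_zero_cons]
    · rintro ⟨s, hv, hc, rfl⟩
      refine ⟨.expand [some s], Valid.expand 0 [u] [some s] ?_, ?_, ?_⟩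
      · exact List.Forall₂.cons (fun s' h => by injection h with h; exact h ▸ hv)
          List.Forall₂.nil
      · simp [Summ.count, Summ.countList]; omega
      · simp [parts, partsList, listEntropy_zero_cons]
  · unfold F
    congr 1
    ext e
    constructor
    · rintro ⟨s, hv, hc, rfl⟩
      cases hv with
      | all =>
        refine ⟨.leafAll, Valid.all u, rfl, ?_⟩
        simp [parts, wt_v]
      | expand w cs subs h =>
        cases h with
        | cons h1 h2 =>
          cases h2
          rename_i os
          cases os with
          | none => simp [Summ.count, Summ.countList] at hc
          | some s' =>
            have := one_le_count s'
            simp [Summ.count, Summ.countList] at hc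
            omega
    · rintro ⟨s, hv, hc, rfl⟩
      cases hv with
      | all =>
        refine ⟨.leafAll, Valid.all _, rfl, ?_⟩
        simp [parts, wt_v]
      | expand w cs subs h =>
        have hsubs : subs = [] := by
          cases subs with
          | nil => rfl
          | cons os rest =>
            cases os with
            | none => simp [Summ.count, Summ.countList] at hc; omega
            | some s' =>
              have := one_le_count s'
              simp [Summ.count, Summ.countList] at hc
              omega
        subst hsubs
        cases h
        refine ⟨.leafAll, Valid.all _, rfl, ?_⟩
        simp [parts, partsList, wt_v, WTree.wt, WTree.wtList]
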